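/- For b ∈ (0, π/2), with the substitution sin φ = x sin b, the integral I₂(b) = ∫_{−b}^{b} cos³φ / √(cos⁴φ − cos⁴b) dφ equals ∫_{−1}^{1} (1 − x² sin²b) / (√(1−x²) · √(1 + cos²b − x² sin²b)) dx. -/

import Mathlib

open Real Set intervalIntegral

/-- For `b ∈ (0, π/2)`, the substitution `sin φ = x sin b` transforms
`I₂(b) = ∫_{−b}^{b} cos³φ / √(cos⁴φ − cos⁴b) dφ` into
`∫_{−1}^{1} (1 − x² sin²b) / (√(1−x²) √(1 + cos²b − x² sin²b)) dx`. -/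
theorem I2_substitution (b : ℝ) (hb : b ∈ Ioo 0 (π / 2)) :
    (∫ φ in (-b)..b, Real.cos φ ^ 3 / Real.sqrt (Real.cos φ ^ 4 - Real.cos b ^ 4)) =
    ∫ x in (-1 : ℝ)..1, (1 - x ^ 2 * Real.sin b ^ 2) /
      (Real.sqrt (1 - x ^ 2) *
        Real.sqrt (1 + Real.cos b ^ 2 - x ^ 2 * Real.sin b ^ 2)) := by
  obtain ⟨hb0, hb2⟩ := hb
  have hsb : 0 < Real.sin b := Real.sin_pos_of_pos_of_lt_pi hb0 (by linarith [Real.pi_pos])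
  have hcb : 0 < Real.cos b := Real.cos_pos_of_mem_Ioo ⟨by linarith, hb2⟩
  have hsub : Icc (-b) b ⊆ Icc (-(π/2)) (π/2) := fun x hx =>
    ⟨by linarith [hx.1], by linarith [hx.2]⟩
  set h : ℝ → ℝ := fun φ => Real.sin φ / Real.sin b with hh
  have hmono : StrictMonoOn h (Icc (-b) b) := by
    intro x hx y hy hxy
    exact div_lt_div_of_pos_right (Real.strictMonoOn_sin (hsub hx) (hsub hy) hxy) hsb
  have hb_mem : (-b : ℝ) ≤ b := by linarith
  have hhb : h b = 1 := by simp [hh, div_self hsb.ne']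
  have hhnb : h (-b) = -1 := by simp [hh, Real.sin_neg, neg_div, div_self hsb.ne']
  have hcont : ContinuousOn h (Icc (-b) b) := (Real.continuous_sin.div_const _).continuousOn
  have himg : h '' Ioo (-b) b = Ioo (-1 : ℝ) 1 := by
    apply Subset.antisymm
    · rintro _ ⟨φ, hφ, rfl⟩
      constructor
      · rw [← hhnb]
        exact hmono ⟨le_refl _, hb_mem⟩ ⟨hφ.1.le, hφ.2.le⟩ hφ.1
      · rw [← hhb]
        exact hmono ⟨hφ.1.le, hφ.2.le⟩ ⟨hb_mem, le_refl _⟩ hφ.2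
    · have := intermediate_value_Ioo hb_mem hcont
      rwa [hhnb, hhb] at this
  set G : ℝ → ℝ := fun x => (1 - x ^ 2 * Real.sin b ^ 2) /
      (Real.sqrt (1 - x ^ 2) *
        Real.sqrt (1 + Real.cos b ^ 2 - x ^ 2 * Real.sin b ^ 2)) with hG
  have hderiv : ∀ φ ∈ Ioo (-b) b,
      HasDerivWithinAt h (Real.cos φ / Real.sin b) (Ioo (-b) b) φ := fun φ _ =>
    ((Real.hasDerivAt_sin φ).div_const _).hasDerivWithinAt
  have hinj : InjOn h (Ioo (-b) b) := hmono.injOn.mono Ioo_subset_Icc_self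
  have key := MeasureTheory.integral_image_eq_integral_abs_deriv_smul
    measurableSet_Ioo hderiv hinj G
  rw [himg] at key
  rw [intervalIntegral.integral_of_le hb_mem,
    intervalIntegral.integral_of_le (by norm_num : (-1:ℝ) ≤ 1),
    MeasureTheory.integral_Ioc_eq_integral_Ioo,
    MeasureTheory.integral_Ioc_eq_integral_Ioo, key]
  apply MeasureTheory.setIntegral_congr_fun measurableSet_Ioo
  intro φ hφ
  have hφI : φ ∈ Icc (-(π/2)) (π/2) := hsub ⟨hφ.1.le, hφ.2.le⟩
  have hcφ : 0 < Real.cos φ := by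
    rcases eq_or_lt_of_le hφI.1 with h1 | h1
    · exfalso; rw [← h1] at hφ; linarith [hφ.1]
    rcases eq_or_lt_of_le hφI.2 with h2 | h2
    · exfalso; rw [h2] at hφ; linarith [hφ.2]
    exact Real.cos_pos_of_mem_Ioo ⟨h1, h2⟩
  have hsφlt : Real.sin φ ^ 2 < Real.sin b ^ 2 := by
    have h1 : Real.sin (-b) < Real.sin φ :=
      Real.strictMonoOn_sin (hsub ⟨le_refl _, hb_mem⟩) hφI hφ.1
    have h2 : Real.sin φ < Real.sin b :=
      Real.strictMonoOn_sin hφI (hsub ⟨hb_mem, le_refl _⟩) hφ.2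
    rw [Real.sin_neg] at h1
    exact sq_lt_sq' h1 h2
  have hA : 0 < Real.sin b ^ 2 - Real.sin φ ^ 2 := by linarith
  have hB : 0 < Real.cos φ ^ 2 + Real.cos b ^ 2 := by positivity
  have hx2 : h φ ^ 2 * Real.sin b ^ 2 = Real.sin φ ^ 2 := by
    simp only [hh]
    field_simp
  have hsq1 : 1 - Real.sin φ ^ 2 = Real.cos φ ^ 2 := by
    have := Real.sin_sq_add_cos_sq φ; linarith
  have h1x2 : 1 - h φ ^ 2 = (Real.sin b ^ 2 - Real.sin φ ^ 2) / Real.sin b ^ 2 := by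
    simp only [hh]
    field_simp
  have hsqrt1 : Real.sqrt (1 - h φ ^ 2) =
      Real.sqrt (Real.sin b ^ 2 - Real.sin φ ^ 2) / Real.sin b := by
    rw [h1x2, Real.sqrt_div hA.le, Real.sqrt_sq hsb.le]
  have hinner : 1 + Real.cos b ^ 2 - Real.sin φ ^ 2
      = Real.cos φ ^ 2 + Real.cos b ^ 2 := by linarith
  have hnum : Real.cos φ ^ 4 - Real.cos b ^ 4 =
      (Real.sin b ^ 2 - Real.sin φ ^ 2) * (Real.cos φ ^ 2 + Real.cos b ^ 2) := by
    have h1 := Real.sin_sq_add_cos_sq φ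
    have h2 := Real.sin_sq_add_cos_sq b
    nlinarith [h1, h2]
  have habs : |Real.cos φ / Real.sin b| = Real.cos φ / Real.sin b :=
    abs_of_pos (div_pos hcφ hsb)
  have hsA : 0 < Real.sqrt (Real.sin b ^ 2 - Real.sin φ ^ 2) := Real.sqrt_pos.mpr hA
  have hsB : 0 < Real.sqrt (Real.cos φ ^ 2 + Real.cos b ^ 2) := Real.sqrt_pos.mpr hB
  simp only [smul_eq_mul, habs, hG]
  rw [hx2, hinner, hsqrt1, hnum, Real.sqrt_mul hA.le, hsq1]
  field_simp
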